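/- Let G be a connected simple graph on n vertices of diameter greater than 3 whose complement G^c is connected. Then λ1(G^c) < λ1(H^c(⌊n/2⌋ - 1, ⌈n/2⌉ - 1)). -/

import Mathlib

open SimpleGraph Finset

/-- Distance matrix of a graph. -/
noncomputable def distMatrix {V : Type*} [Fintype V] (G : SimpleGraph V) : Matrix V V ℝ :=
  Matrix.of fun u v => (G.dist u v : ℝ)

/-- Largest eigenvalue of the distance matrix (distance spectral radius). -/
noncomputable def lam1 {V : Type*} [Fintype V] (G : SimpleGraph V) : ℝ :=
  sSup {μ : ℝ | ∃ x : V → ℝ, x ≠ 0 ∧ (distMatrix G).mulVec x = μ • x}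

/-- Least eigenvalue of the distance matrix. -/
noncomputable def lamMin {V : Type*} [Fintype V] (G : SimpleGraph V) : ℝ :=
  sInf {μ : ℝ | ∃ x : V → ℝ, x ≠ 0 ∧ (distMatrix G).mulVec x = μ • x}

/-- `H(s,t)`: complete graph on `s+t` vertices plus vertex `u = s+t` joined to the
first `s` clique vertices and vertex `v = s+t+1` joined to the remaining `t`. -/
def Hgraph (s t : ℕ) : SimpleGraph (Fin (s + t + 2)) :=
  SimpleGraph.fromRel fun i j =>
    (i.val < s + t ∧ j.val < s + t) ∨
    (i.val = s + t ∧ j.val < s) ∨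
    (i.val = s + t + 1 ∧ s ≤ j.val ∧ j.val < s + t)

/-- The double star `T(a,b)`: centers `0, 1`; `a` pendants on `0`, `b` pendants on `1`. -/
def Tdouble (a b : ℕ) : SimpleGraph (Fin (a + b + 2)) :=
  SimpleGraph.fromRel fun i j =>
    (i.val = 0 ∧ j.val = 1) ∨
    (i.val = 0 ∧ 2 ≤ j.val ∧ j.val < a + 2) ∨
    (i.val = 1 ∧ a + 2 ≤ j.val)

/-- `T1(a,b)`: path `0-1-2` with `a` pendants on `0` and `b` pendants on `2`. -/
def T1graph (a b : ℕ) : SimpleGraph (Fin (a + b + 3)) :=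
  SimpleGraph.fromRel fun i j =>
    (i.val = 0 ∧ j.val = 1) ∨ (i.val = 1 ∧ j.val = 2) ∨
    (i.val = 0 ∧ 3 ≤ j.val ∧ j.val < a + 3) ∨
    (i.val = 2 ∧ a + 3 ≤ j.val)

/-- `T2(a,b)`: the double star `T(a,b)` (centers `0,1`, pendants `2..a+1` on `0`,
`a+2..a+b+1` on `1`) with an extra pendant vertex `a+b+2` attached to the pendant `2`. -/
def T2graph (a b : ℕ) : SimpleGraph (Fin (a + b + 3)) :=
  SimpleGraph.fromRel fun i j =>
    (i.val = 0 ∧ j.val = 1) ∨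
    (i.val = 0 ∧ 2 ≤ j.val ∧ j.val < a + 2) ∨
    (i.val = 1 ∧ a + 2 ≤ j.val ∧ j.val < a + b + 2) ∨
    (i.val = 2 ∧ j.val = a + b + 2)

/-- `B1(p,q)`: complete bipartite graph with parts `{0,…,p-1}` and `{p,…,p+q-1}`
minus the edge between `u = 0` and `v = p`. -/
def B1graph (p q : ℕ) : SimpleGraph (Fin (p + q)) :=
  SimpleGraph.fromRel fun i j =>
    i.val < p ∧ p ≤ j.val ∧ ¬(i.val = 0 ∧ j.val = p)

/-- `B2(p,q)`: `B1(p,q)` where all edges at `w = 1` except the edge to `v = p` are deleted. -/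
def B2graph (p q : ℕ) : SimpleGraph (Fin (p + q)) :=
  SimpleGraph.fromRel fun i j =>
    i.val < p ∧ p ≤ j.val ∧ ¬(i.val = 0 ∧ j.val = p) ∧ (i.val = 1 → j.val = p)

/-- `L'` on `n` vertices: `K_{n-2}` on `{0,…,n-3}` minus the edge `wu` (`w = 0`, `u = 1`),
with a pendant `w' = n-2` at `w` and a pendant `v = n-1` at `u`. -/
def L'graph (n : ℕ) : SimpleGraph (Fin n) :=
  SimpleGraph.fromRel fun i j =>
    (i.val < n - 2 ∧ j.val < n - 2 ∧ ¬(i.val = 0 ∧ j.val = 1) ∧ ¬(i.val = 1 ∧ j.val = 0)) ∨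
    (i.val = 0 ∧ j.val = n - 2) ∨
    (i.val = 1 ∧ j.val = n - 1)

/-- `L(p,q)`: disjoint union of `K_p` on `{0,…,p-1}` (minus the edge `wu`, `w = 0`, `u = 1`)
and `K_q` on `{p,…,p+q-1}`, plus the edge from `u = 1` to `v = p`. -/
def Lgraph (p q : ℕ) : SimpleGraph (Fin (p + q)) :=
  SimpleGraph.fromRel fun i j =>
    (i.val < p ∧ j.val < p ∧ ¬(i.val = 0 ∧ j.val = 1) ∧ ¬(i.val = 1 ∧ j.val = 0)) ∨
    (p ≤ i.val ∧ p ≤ j.val) ∨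
    (i.val = 1 ∧ j.val = p)

/-- The star `K_{1,n-1}` on `n` vertices with center `0`. -/
def starGraph (n : ℕ) : SimpleGraph (Fin n) :=
  SimpleGraph.fromRel fun i _ => i.val = 0

section EigLemmas

variable {V : Type*} [Fintype V]

lemma eig_le_rowsum {A : Matrix V V ℝ}
    (h0 : ∀ i j, 0 ≤ A i j) {R : ℝ} (hR : ∀ i, ∑ j, A i j ≤ R)
    {μ : ℝ} {x : V → ℝ} (hx : x ≠ 0) (hEq : A.mulVec x = μ • x) : μ ≤ R := by
  obtain ⟨j0, hj0⟩ : ∃ j, x j ≠ 0 := by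
    by_contra h; push_neg at h; exact hx (funext fun j => h j)
  obtain ⟨i, -, hi⟩ := Finset.exists_max_image Finset.univ (fun v => |x v|)
    ⟨j0, Finset.mem_univ _⟩
  have hxi : 0 < |x i| := lt_of_lt_of_le (abs_pos.mpr hj0) (hi j0 (Finset.mem_univ _))
  have h1 : μ * x i = ∑ j, A i j * x j := by
    have := congrFun hEq i
    simpa [Matrix.mulVec, dotProduct, Pi.smul_apply, smul_eq_mul] using this.symm
  have key : μ * |x i| ≤ R * |x i| := by
    calc μ * |x i| ≤ |μ| * |x i| := mul_le_mul_of_nonneg_right (le_abs_self μ) (abs_nonneg _)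
      _ = |μ * x i| := (abs_mul μ (x i)).symm
      _ = |∑ j, A i j * x j| := by rw [h1]
      _ ≤ ∑ j, |A i j * x j| := Finset.abs_sum_le_sum_abs _ _
      _ ≤ ∑ j, A i j * |x i| := Finset.sum_le_sum fun j _ => by
            rw [abs_mul, abs_of_nonneg (h0 i j)]
            exact mul_le_mul_of_nonneg_left (hi j (Finset.mem_univ _)) (h0 i j)
      _ = (∑ j, A i j) * |x i| := by rw [Finset.sum_mul]
      _ ≤ R * |x i| := mul_le_mul_of_nonneg_right (hR i) (abs_nonneg _)
  exact le_of_mul_le_mul_right key hxi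

lemma lam1_le (G : SimpleGraph V) {R : ℝ}
    (hR : ∀ i, ∑ j, (G.dist i j : ℝ) ≤ R) (h0 : 0 ≤ R) : lam1 G ≤ R := by
  apply Real.sSup_le _ h0
  rintro μ ⟨x, hx, hEq⟩
  exact eig_le_rowsum (fun i j => by positivity) hR hx hEq

lemma rayleigh_le_lam1 [DecidableEq V] [Nonempty V] (G : SimpleGraph V) :
    (∑ i, ∑ j, (G.dist i j : ℝ)) / (Fintype.card V : ℝ) ≤ lam1 G := by
  set A : Matrix V V ℝ := distMatrix G with hA
  have hherm : A.IsHermitian := by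
    unfold Matrix.IsHermitian
    ext i j
    simp [hA, distMatrix, Matrix.conjTranspose_apply, SimpleGraph.dist_comm]
  have hT : (Matrix.toEuclideanLin A).IsSymmetric :=
    Matrix.isHermitian_iff_isSymmetric.mp hherm
  haveI : Nontrivial (EuclideanSpace ℝ V) := by
    refine ⟨0, (WithLp.equiv 2 (V → ℝ)).symm (fun _ => 1), fun h => ?_⟩
    have := congrFun ((WithLp.equiv 2 (V → ℝ)).symm.injective h.symm) (Classical.arbitrary V)
    exact one_ne_zero this
  set T := Matrix.toEuclideanLin A with hTdef
  set μ : ℝ := ⨆ x : { x : EuclideanSpace ℝ V // x ≠ 0 },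
      RCLike.re (inner ℝ (T x) (x : EuclideanSpace ℝ V)) / ‖(x : EuclideanSpace ℝ V)‖ ^ 2
    with hμ
  have hev := hT.hasEigenvalue_iSup_of_finiteDimensional
  obtain ⟨v, hv⟩ := hev.exists_hasEigenvector
  have hvec : T v = μ • v := hv.apply_eq_smul
  set y : V → ℝ := WithLp.equiv 2 (V → ℝ) v with hy
  have hy0 : y ≠ 0 := by
    intro h
    exact hv.2 ((WithLp.equiv 2 (V → ℝ)).injective (by simpa [hy] using h))
  have hmv : A.mulVec y = μ • y := by
    have h2 := congrArg (WithLp.equiv 2 (V → ℝ)) hvec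
    simpa [hTdef, Matrix.ofLp_toEuclideanLin_apply, Matrix.toLin'_apply, hy]
      using h2
  have hbdd : BddAbove {c : ℝ | ∃ x : V → ℝ, x ≠ 0 ∧ A.mulVec x = c • x} := by
    refine ⟨∑ i, ∑ j, A i j, ?_⟩
    rintro c ⟨x, hx, hEq⟩
    refine eig_le_rowsum (fun i j => by simp [hA, distMatrix])
      (fun i => ?_) hx hEq
    exact Finset.single_le_sum (f := fun i => ∑ j, A i j)
      (fun i _ => Finset.sum_nonneg fun j _ => by simp [hA, distMatrix]) (Finset.mem_univ i)
  have hle2 : μ ≤ lam1 G := by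
    unfold lam1
    exact le_csSup hbdd ⟨y, hy0, hmv⟩
  refine le_trans ?_ hle2
  set x₀ : EuclideanSpace ℝ V := (WithLp.equiv 2 (V → ℝ)).symm (fun _ => 1) with hx₀
  have hx₀0 : x₀ ≠ 0 := by
    intro h
    have := congrFun (congrArg (WithLp.equiv 2 (V → ℝ)) h) (Classical.arbitrary V)
    exact one_ne_zero this
  have hbdd2 : BddAbove (Set.range fun x : {x : EuclideanSpace ℝ V // x ≠ 0} =>
      RCLike.re (inner ℝ (T x) (x : EuclideanSpace ℝ V)) / ‖(x : EuclideanSpace ℝ V)‖ ^ 2) := by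
    refine ⟨‖LinearMap.toContinuousLinearMap T‖, ?_⟩
    rintro c ⟨z, rfl⟩
    have hz : (0:ℝ) < ‖(z : EuclideanSpace ℝ V)‖ := norm_pos_iff.mpr z.2
    simp only [RCLike.re_to_real]
    rw [div_le_iff₀ (by positivity)]
    calc (inner ℝ (T z) (z : EuclideanSpace ℝ V))
        ≤ ‖T (z : EuclideanSpace ℝ V)‖ * ‖(z : EuclideanSpace ℝ V)‖ := real_inner_le_norm _ _
      _ ≤ (‖LinearMap.toContinuousLinearMap T‖ * ‖(z : EuclideanSpace ℝ V)‖) *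
            ‖(z : EuclideanSpace ℝ V)‖ := by
          refine mul_le_mul_of_nonneg_right ?_ (norm_nonneg _)
          simpa using (LinearMap.toContinuousLinearMap T).le_opNorm (z : EuclideanSpace ℝ V)
      _ = ‖LinearMap.toContinuousLinearMap T‖ * ‖(z : EuclideanSpace ℝ V)‖ ^ 2 := by ring
  have hray := le_ciSup hbdd2 (⟨x₀, hx₀0⟩ : {x : EuclideanSpace ℝ V // x ≠ 0})
  rw [← hμ] at hray
  refine le_trans (le_of_eq ?_) hray
  have hTx₀ : T x₀ = (WithLp.equiv 2 (V → ℝ)).symm (A.mulVec fun _ => 1) := by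
    rw [hTdef, hx₀]; exact Matrix.toEuclideanLin_apply_piLp_toLp A _
  have hnum : (inner ℝ (T x₀) x₀) = ∑ i, ∑ j, (G.dist i j : ℝ) := by
    rw [hTx₀]
    simp [PiLp.inner_apply, hx₀, PiLp.toLp_apply, Matrix.mulVec,
      dotProduct, hA, distMatrix]
  have hden : ‖x₀‖ ^ 2 = (Fintype.card V : ℝ) := by
    rw [← real_inner_self_eq_norm_sq]
    simp [PiLp.inner_apply, hx₀, PiLp.toLp_apply, Finset.card_univ, EuclideanSpace.norm_sq_eq]
  simp only [RCLike.re_to_real]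
  rw [hnum, hden]
end EigLemmas

section ComplLemmas

set_option linter.unusedSectionVars false

variable {V : Type*} [Fintype V] {G : SimpleGraph V}

lemma adj_compl_of_dist_ge {u w : V} (h : 2 ≤ G.dist u w) : Gᶜ.Adj u w := by
  rw [SimpleGraph.compl_adj]
  constructor
  · intro he; subst he; simp [SimpleGraph.dist_self] at h
  · intro hadj
    have := SimpleGraph.dist_eq_one_iff_adj.mpr hadj
    omega

lemma compl_dist_le_two (hconn : G.Connected) {a b : V} (hab : 3 < G.dist a b)
    (u v : V) : Gᶜ.dist u v ≤ 2 := by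
  rcases eq_or_ne u v with rfl | huv
  · simp [SimpleGraph.dist_self]
  by_cases hadj : Gᶜ.Adj u v
  · rw [SimpleGraph.dist_eq_one_iff_adj.mpr hadj]; omega
  have hGuv : G.Adj u v := by
    by_contra hg
    exact hadj ((SimpleGraph.compl_adj _ _ _).mpr ⟨huv, hg⟩)
  have hduv : G.dist u v = 1 := SimpleGraph.dist_eq_one_iff_adj.mpr hGuv
  have key : ∃ w, 2 ≤ G.dist u w ∧ 2 ≤ G.dist v w := by
    rcases le_or_gt 2 (G.dist u a) with h1 | h1
    · rcases le_or_gt 2 (G.dist v a) with h2 | h2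
      · exact ⟨a, h1, h2⟩
      · have t1 := hconn.dist_triangle (u := a) (v := v) (w := b)
        have t2 := hconn.dist_triangle (u := v) (v := u) (w := b)
        have t3 := hconn.dist_triangle (u := u) (v := v) (w := b)
        rw [SimpleGraph.dist_comm (u := a) (v := v)] at t1
        rw [SimpleGraph.dist_comm (u := v) (v := u), hduv] at t2
        rw [hduv] at t3
        exact ⟨b, by omega, by omega⟩
    · have t1 := hconn.dist_triangle (u := a) (v := u) (w := b)
      have t2 := hconn.dist_triangle (u := v) (v := u) (w := b)
      have t3 := hconn.dist_triangle (u := u) (v := v) (w := b)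
      rw [SimpleGraph.dist_comm (u := a) (v := u)] at t1
      rw [SimpleGraph.dist_comm (u := v) (v := u), hduv] at t2
      rw [hduv] at t3
      exact ⟨b, by omega, by omega⟩
  obtain ⟨w, hw1, hw2⟩ := key
  have h1 : Gᶜ.Adj u w := adj_compl_of_dist_ge hw1
  have h2 : Gᶜ.Adj w v := (adj_compl_of_dist_ge hw2).symm
  calc Gᶜ.dist u v ≤ (SimpleGraph.Walk.cons h1 h2.toWalk).length := SimpleGraph.dist_le _
    _ = 2 := by simp

lemma compl_two_nbrs (hconn : G.Connected) {a b : V} (hab : 3 < G.dist a b)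
    (u : V) : ∃ v₁ v₂ : V, v₁ ≠ v₂ ∧ Gᶜ.Adj u v₁ ∧ Gᶜ.Adj u v₂ := by
  have key : ∀ c : V, 3 ≤ G.dist u c →
      ∃ v₁ v₂ : V, v₁ ≠ v₂ ∧ Gᶜ.Adj u v₁ ∧ Gᶜ.Adj u v₂ := by
    intro c hc
    have huc : c ≠ u := by
      intro he; subst he; simp [SimpleGraph.dist_self] at hc
    obtain ⟨p⟩ := hconn.preconnected c u
    obtain ⟨w, hw, -⟩ :=
      SimpleGraph.Walk.not_nil_iff.mp (SimpleGraph.Walk.not_nil_of_ne (p := p) huc)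
    have hwc : G.dist w c = 1 := SimpleGraph.dist_eq_one_iff_adj.mpr hw.symm
    have t1 := hconn.dist_triangle (u := u) (v := w) (w := c)
    have huw : 2 ≤ G.dist u w := by omega
    exact ⟨c, w, fun he => (he ▸ hw).ne rfl,
      adj_compl_of_dist_ge (by omega), adj_compl_of_dist_ge huw⟩
  rcases le_or_gt 2 (G.dist u a) with ha | ha
  · rcases le_or_gt 2 (G.dist u b) with hb | hb
    · refine ⟨a, b, ?_, adj_compl_of_dist_ge ha, adj_compl_of_dist_ge hb⟩
      intro he; subst he; simp [SimpleGraph.dist_self] at hab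
    · have : 3 ≤ G.dist u a := by
        have t2 := hconn.dist_triangle (u := a) (v := u) (w := b)
        rw [SimpleGraph.dist_comm (u := a) (v := u)] at t2
        omega
      exact key a this
  · have t2 := hconn.dist_triangle (u := a) (v := u) (w := b)
    rw [SimpleGraph.dist_comm (u := a) (v := u)] at t2
    exact key b (by omega)

lemma compl_rowsum_le (hconn : G.Connected) {a b : V} (hab : 3 < G.dist a b)
    (u : V) : ∑ v, (Gᶜ.dist u v : ℝ) ≤ 2 * (Fintype.card V : ℝ) - 4 := by
  classical
  obtain ⟨v₁, v₂, h12, h1, h2⟩ := compl_two_nbrs hconn hab u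
  have hd2 := compl_dist_le_two hconn hab
  have pt : ∀ v : V, (Gᶜ.dist u v : ℝ) ≤
      2 - (if v = u then 2 else 0) - (if v = v₁ then 1 else 0) - (if v = v₂ then 1 else 0) := by
    intro v
    by_cases e1 : v = u
    · have hv1 : v ≠ v₁ := by rw [e1]; exact h1.ne
      have hv2 : v ≠ v₂ := by rw [e1]; exact h2.ne
      rw [if_pos e1, if_neg hv1, if_neg hv2, e1, SimpleGraph.dist_self]
      norm_num
    by_cases e2 : v = v₁
    · have hv2 : v ≠ v₂ := by rw [e2]; exact h12
      have hd : Gᶜ.dist u v = 1 := SimpleGraph.dist_eq_one_iff_adj.mpr (by rw [e2]; exact h1)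
      rw [if_neg e1, if_pos e2, if_neg hv2, hd]
      norm_num
    by_cases e3 : v = v₂
    · have hd : Gᶜ.dist u v = 1 := SimpleGraph.dist_eq_one_iff_adj.mpr (by rw [e3]; exact h2)
      rw [if_neg e1, if_neg e2, if_pos e3, hd]
      norm_num
    · rw [if_neg e1, if_neg e2, if_neg e3]
      have hc : (Gᶜ.dist u v : ℝ) ≤ 2 := by exact_mod_cast hd2 u v
      linarith
  calc ∑ v, (Gᶜ.dist u v : ℝ) ≤ ∑ v : V,
      (2 - (if v = u then 2 else 0) - (if v = v₁ then 1 else 0) - (if v = v₂ then 1 else 0)) :=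
        Finset.sum_le_sum fun v _ => pt v
    _ = 2 * (Fintype.card V : ℝ) - 4 := by
      rw [Finset.sum_sub_distrib, Finset.sum_sub_distrib, Finset.sum_sub_distrib]
      simp [Finset.sum_ite_eq', Finset.card_univ]
      ring

end ComplLemmas

section HLemmas

lemma Hc_adj (s t : ℕ) (a b : Fin (s + t + 2)) :
    ((Hgraph s t)ᶜ).Adj a b ↔
      (a.val < s ∧ b.val = s+t+1) ∨ (b.val < s ∧ a.val = s+t+1) ∨
      (s ≤ a.val ∧ a.val < s+t ∧ b.val = s+t) ∨ (s ≤ b.val ∧ b.val < s+t ∧ a.val = s+t) ∨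
      (a.val = s+t ∧ b.val = s+t+1) ∨ (a.val = s+t+1 ∧ b.val = s+t) := by
  have ha := a.isLt; have hb := b.isLt
  rw [SimpleGraph.compl_adj, Hgraph, SimpleGraph.fromRel_adj]
  simp only [ne_eq, Fin.ext_iff]
  omega

lemma Hc_conn (s t : ℕ) : ((Hgraph s t)ᶜ).Connected := by
  rw [SimpleGraph.connected_iff_exists_forall_reachable]
  refine ⟨⟨s+t, by omega⟩, fun w => ?_⟩
  have hadj_uv : ((Hgraph s t)ᶜ).Adj ⟨s+t, by omega⟩ ⟨s+t+1, by omega⟩ := by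
    rw [Hc_adj]
    exact Or.inr (Or.inr (Or.inr (Or.inr (Or.inl ⟨rfl, rfl⟩))))
  have hw := w.isLt
  rcases lt_or_ge w.val s with h | h
  · have h2 : ((Hgraph s t)ᶜ).Adj ⟨s+t+1, by omega⟩ w := by
      rw [Hc_adj]
      exact Or.inr (Or.inl ⟨h, rfl⟩)
    exact hadj_uv.reachable.trans h2.reachable
  rcases lt_or_ge w.val (s+t) with h' | h'
  · have h2 : ((Hgraph s t)ᶜ).Adj ⟨s+t, by omega⟩ w := by
      rw [Hc_adj]
      exact Or.inr (Or.inr (Or.inr (Or.inl ⟨h, h', rfl⟩)))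
    exact h2.reachable
  rcases eq_or_ne w.val (s+t) with h'' | h''
  · have : w = ⟨s+t, by omega⟩ := Fin.ext (by simp [h''])
    rw [this]
  · have : w = ⟨s+t+1, by omega⟩ := Fin.ext (by simp; omega)
    rw [this]
    exact hadj_uv.reachable

lemma Hc_total (s t : ℕ) :
    2*(s+t+2)*(s+t+1) ≤ (∑ i, ∑ j, ((Hgraph s t)ᶜ).dist i j) + (2*(s+t)+2) := by
  classical
  have hconn := Hc_conn s t
  set Gc := (Hgraph s t)ᶜ with hGc
  have row : ∀ i, 2*(s+t+1) ≤ (∑ j, Gc.dist i j) +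
      (Finset.univ.filter (Gc.Adj i)).card := by
    intro i
    have pt : ∀ j, 2 ≤ Gc.dist i j +
        ((if j = i then 2 else 0) + (if Gc.Adj i j then 1 else 0)) := by
      intro j
      by_cases e1 : j = i
      · simp [e1]
      by_cases e2 : Gc.Adj i j
      · have hd : Gc.dist i j = 1 := SimpleGraph.dist_eq_one_iff_adj.mpr e2
        simp [e1, e2, hd]
      · have hne : i ≠ j := fun h => e1 h.symm
        have hpos : 0 < Gc.dist i j := hconn.pos_dist_of_ne hne
        have hne1 : Gc.dist i j ≠ 1 := fun h => e2 (SimpleGraph.dist_eq_one_iff_adj.mp h)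
        simp only [e1, e2, if_false, add_zero]
        omega
    have hsum := Finset.sum_le_sum (fun j (_ : j ∈ Finset.univ) => pt j)
    rw [Finset.sum_add_distrib, Finset.sum_add_distrib] at hsum
    have e1 : ∑ _j : Fin (s+t+2), (2:ℕ) = (s+t+2)*2 := by
      simp [Finset.sum_const, Finset.card_univ, mul_comm]
    have e2 : (∑ j : Fin (s+t+2), if j = i then 2 else 0) = 2 := by
      rw [Finset.sum_ite_eq']
      simp
    have e3 : (Finset.univ.filter (Gc.Adj i)).card
        = ∑ j, (if Gc.Adj i j then 1 else 0) := Finset.card_filter _ _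
    rw [e1, e2, ← e3] at hsum
    omega
  have hdeg : ∀ i : Fin (s+t+2), (Finset.univ.filter (Gc.Adj i)).card ≤
      (if i.val < s+t then 1 else if i.val = s+t then t+1 else s+1) := by
    intro i
    have hi := i.isLt
    by_cases h1 : i.val < s+t
    · rw [if_pos h1]
      apply Finset.card_le_one.mpr
      intro x hx y hy
      rw [Finset.mem_filter] at hx hy
      have hx' := (Hc_adj s t i x).mp hx.2
      have hy' := (Hc_adj s t i y).mp hy.2
      exact Fin.ext (by omega)
    by_cases h2 : i.val = s+t
    · rw [if_neg h1, if_pos h2]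
      calc (Finset.univ.filter (Gc.Adj i)).card
          ≤ (insert (s+t+1) (Finset.Ico s (s+t))).card := by
            apply Finset.card_le_card_of_injOn Fin.val
            · intro x hx
              rw [Finset.mem_coe, Finset.mem_filter] at hx
              have := (Hc_adj s t i x).mp hx.2
              simp only [Finset.mem_coe, Finset.mem_insert, Finset.mem_Ico]
              omega
            · exact Fin.val_injective.injOn
        _ ≤ t+1 := by
            refine le_trans (Finset.card_insert_le _ _) ?_
            rw [Nat.card_Ico]
            omega
    · rw [if_neg h1, if_neg h2]
      have h3 : i.val = s+t+1 := by omega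
      calc (Finset.univ.filter (Gc.Adj i)).card
          ≤ (insert (s+t) (Finset.Ico 0 s)).card := by
            apply Finset.card_le_card_of_injOn Fin.val
            · intro x hx
              rw [Finset.mem_coe, Finset.mem_filter] at hx
              have := (Hc_adj s t i x).mp hx.2
              simp only [Finset.mem_coe, Finset.mem_insert, Finset.mem_Ico]
              omega
            · exact Fin.val_injective.injOn
        _ ≤ s+1 := by
            refine le_trans (Finset.card_insert_le _ _) ?_
            rw [Nat.card_Ico]
            omega
  have hdegsum : ∑ i : Fin (s+t+2), (Finset.univ.filter (Gc.Adj i)).card ≤ 2*(s+t)+2 := by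
    calc ∑ i : Fin (s+t+2), (Finset.univ.filter (Gc.Adj i)).card
        ≤ ∑ i : Fin (s+t+2), (if i.val < s+t then 1 else if i.val = s+t then t+1 else s+1) :=
          Finset.sum_le_sum fun i _ => hdeg i
      _ = ∑ k ∈ Finset.range (s+t+2), (if k < s+t then 1 else if k = s+t then t+1 else s+1) :=
          Fin.sum_univ_eq_sum_range (fun k => if k < s+t then 1 else if k = s+t then t+1 else s+1)
            (s+t+2)
      _ = 2*(s+t)+2 := by
          rw [Finset.sum_range_succ, Finset.sum_range_succ]
          have he : (∑ k ∈ Finset.range (s+t),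
              (if k < s+t then 1 else if k = s+t then t+1 else s+1))
              = ∑ _k ∈ Finset.range (s+t), 1 :=
            Finset.sum_congr rfl fun k hk => by rw [if_pos (Finset.mem_range.mp hk)]
          rw [he, Finset.sum_const, Finset.card_range, smul_eq_mul]
          rw [if_neg (by omega), if_pos rfl, if_neg (by omega), if_neg (by omega)]
          ring
  have hmain := Finset.sum_le_sum (fun i (_ : i ∈ Finset.univ) => row i)
  rw [Finset.sum_add_distrib, Finset.sum_const, Finset.card_univ, Fintype.card_fin,
    smul_eq_mul] at hmain
  calc 2*(s+t+2)*(s+t+1) = (s+t+2)*(2*(s+t+1)) := by ring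
    _ ≤ (∑ i, ∑ j, Gc.dist i j) + ∑ i : Fin (s+t+2), (Finset.univ.filter (Gc.Adj i)).card :=
        hmain
    _ ≤ (∑ i, ∑ j, Gc.dist i j) + (2*(s+t)+2) := by omega

end HLemmas


/-- For `G` connected on `n` vertices of diameter `> 3` with `Gᶜ` connected,
`λ₁(Gᶜ) < λ₁(H(⌊n/2⌋-1, ⌈n/2⌉-1)ᶜ)`. -/
theorem stmt_4 {V : Type*} [Fintype V] (n : ℕ) (G : SimpleGraph V)
    (hcard : Fintype.card V = n)
    (hconn : G.Connected) (hcc : Gᶜ.Connected)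
    (hdiam : ∃ u v : V, 3 < G.dist u v) :
    lam1 Gᶜ < lam1 (Hgraph (n / 2 - 1) ((n + 1) / 2 - 1))ᶜ := by
  obtain ⟨a, b, hab⟩ := hdiam
  have hne : a ≠ b := by rintro rfl; simp [SimpleGraph.dist_self] at hab
  have hn2 : 2 ≤ n := by
    rw [← hcard]
    exact Fintype.one_lt_card_iff_nontrivial.mpr ⟨a, b, hne⟩
  set s := n / 2 - 1 with hs
  set t := (n + 1) / 2 - 1 with ht
  have hst : s + t + 2 = n := by omega
  have h1 : lam1 Gᶜ ≤ 2 * (n:ℝ) - 4 := by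
    apply lam1_le
    · intro i
      have h := compl_rowsum_le hconn hab i
      rw [hcard] at h
      exact h
    · have : (2:ℝ) ≤ (n:ℝ) := by exact_mod_cast hn2
      linarith
  have h2 : (∑ i, ∑ j, (((Hgraph s t)ᶜ).dist i j : ℝ)) / ((s+t+2 : ℕ) : ℝ)
      ≤ lam1 (Hgraph s t)ᶜ := by
    have h := rayleigh_le_lam1 ((Hgraph s t)ᶜ)
    rwa [Fintype.card_fin] at h
  have h3 : 2*((s:ℝ)+t+2)*((s:ℝ)+t+1)
      ≤ (∑ i, ∑ j, (((Hgraph s t)ᶜ).dist i j : ℝ)) + (2*((s:ℝ)+t)+2) := by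
    have := Hc_total s t
    push_cast
    exact_mod_cast this
  have hnst : (n:ℝ) = (s:ℝ) + t + 2 := by exact_mod_cast (congrArg (Nat.cast (R := ℝ)) hst).symm
  refine lt_of_le_of_lt h1 (lt_of_lt_of_le ?_ h2)
  rw [lt_div_iff₀ (by positivity)]
  have hcast : (((s+t+2 : ℕ)) : ℝ) = (s:ℝ) + t + 2 := by push_cast; ring
  rw [hcast, hnst]
  nlinarith [h3]
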